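/- Let $a$ be an element of a ring $K$ such that $\ell \cdot \tilde{f}(a) = 0$ for some monic integer polynomial $\tilde{f}(x)$ without constant term and some positive integer $\ell$. Then the minimal polynomial $f(x)$ of $a$ has the form $f(x) = d \cdot f^*(x)$, where $d$ is a positive integer and $f^*(x)$ is a monic integer polynomial without constant term. -/

import Mathlib

/-- A (not necessarily unital) ring `K` is finitely separable if every element `a`
lying outside a subring `A` can be separated from `A` by a homomorphism to a finite ring. -/
def IsFinSep (K : Type) [NonUnitalRing K] : Prop :=
  ∀ (a : K) (A : NonUnitalSubring K), a ∉ A →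
    ∃ (F : Type) (_ : NonUnitalRing F) (_ : Finite F),
      ∃ φ : K →ₙ+* F, φ a ∉ ⇑φ '' (A : Set K)

/-- `ppow a n = a ^ (n + 1)`, the positive powers of `a` in a non-unital ring. -/
def ppow {K : Type} [NonUnitalRing K] (a : K) : ℕ → K
  | 0 => a
  | n + 1 => ppow a n * a

/-- Evaluation of an integer polynomial (whose constant term is ignored, hence
meaningful for polynomials with zero constant term) at an element of a non-unital ring. -/
def evalnc {K : Type} [NonUnitalRing K] (p : Polynomial ℤ) (a : K) : K :=
  ∑ i ∈ Finset.range p.natDegree, p.coeff (i + 1) • ppow a i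

open Polynomial

variable {K : Type} [NonUnitalRing K]

lemma snd_sum {s : Finset ℕ} (g : ℕ → Unitization ℤ K) :
    (∑ i ∈ s, g i).snd = ∑ i ∈ s, (g i).snd :=
  map_sum (Unitization.sndHom ℤ ℤ K) g s

lemma inr_ppow (a : K) : ∀ n : ℕ, ((ppow a n : K) : Unitization ℤ K) = (a : Unitization ℤ K) ^ (n + 1)
  | 0 => by simp [ppow]
  | n + 1 => by
    rw [ppow, Unitization.inr_mul, inr_ppow a n]
    exact (pow_succ _ _).symm

lemma snd_pow (a : K) (n : ℕ) : ((a : Unitization ℤ K) ^ (n + 1)).snd = ppow a n := by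
  rw [← inr_ppow, Unitization.snd_inr]

lemma snd_aeval (p : ℤ[X]) (a : K) :
    (Polynomial.aeval (a : Unitization ℤ K) p).snd = evalnc p a := by
  rw [aeval_eq_sum_range, snd_sum, Finset.sum_range_succ']
  simp only [Unitization.snd_smul, snd_pow, pow_zero, Unitization.snd_one, smul_zero, add_zero]
  rfl

lemma fst_aeval (p : ℤ[X]) (a : K) :
    (Polynomial.aeval (a : Unitization ℤ K) p).fst = p.coeff 0 := by
  have := Polynomial.aeval_algHom_apply (Unitization.fstHom ℤ K) (a : Unitization ℤ K) p
  simp only [Unitization.fstHom_apply, Unitization.fst_inr] at this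
  rw [← this, aeval_def, eval₂_at_zero]
  simp

lemma aeval_eq_zero {p : ℤ[X]} {a : K} (h0 : p.coeff 0 = 0) (he : evalnc p a = 0) :
    Polynomial.aeval (a : Unitization ℤ K) p = 0 := by
  ext
  · rw [fst_aeval, h0, Unitization.fst_zero]
  · rw [snd_aeval, he, Unitization.snd_zero]

lemma pdiv (f : ℤ[X]) (hf : f ≠ 0) (p : ℤ[X]) :
    ∃ (k : ℕ) (q r : ℤ[X]), C (f.leadingCoeff ^ k) * p = q * f + r ∧
      (r = 0 ∨ r.natDegree < f.natDegree) := by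
  generalize hn : p.natDegree = n
  induction n using Nat.strong_induction_on generalizing p with
  | _ n ih =>
    by_cases h0 : p = 0
    · exact ⟨0, 0, 0, by simp [h0], Or.inl rfl⟩
    by_cases hdeg : p.natDegree < f.natDegree
    · exact ⟨0, 0, p, by simp, Or.inr hdeg⟩
    push_neg at hdeg
    have hd : f.leadingCoeff ≠ 0 := leadingCoeff_ne_zero.mpr hf
    have hpl : p.leadingCoeff ≠ 0 := leadingCoeff_ne_zero.mpr h0
    set d := f.leadingCoeff with hdd
    set t := p.natDegree - f.natDegree with ht
    set B : ℤ[X] := C p.leadingCoeff * (X ^ t * f) with hB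
    by_cases hp' : C d * p - B = 0
    · refine ⟨1, C p.leadingCoeff * X ^ t, 0, ?_, Or.inl rfl⟩
      have h2 := sub_eq_zero.mp hp'
      rw [pow_one, h2, hB]; ring
    · have hdB : (C d * p).degree = B.degree := by
        rw [hB, degree_mul, degree_mul, degree_mul, degree_C hd, degree_C hpl,
          degree_X_pow, zero_add, zero_add, degree_eq_natDegree hf,
          degree_eq_natDegree h0, ← Nat.cast_add, Nat.sub_add_cancel hdeg]
      have hlead : (C d * p).leadingCoeff = B.leadingCoeff := by
        rw [hB, leadingCoeff_mul, leadingCoeff_mul, leadingCoeff_mul, leadingCoeff_C,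
          leadingCoeff_C, leadingCoeff_X_pow, one_mul, mul_comm]
      have hCp : C d * p ≠ 0 := mul_ne_zero (fun h => hd (by simpa using h)) h0
      have hlt : (C d * p - B).natDegree < p.natDegree := by
        have := degree_sub_lt hdB hCp hlead
        rw [degree_mul, degree_C hd, zero_add] at this
        exact natDegree_lt_natDegree hp' this
      obtain ⟨k, q, r, heq, hr⟩ := ih _ (hn ▸ hlt) (C d * p - B) rfl
      refine ⟨k + 1, q + C (d ^ k) * C p.leadingCoeff * X ^ t, r, ?_, hr⟩
      rw [hB] at heq
      rw [pow_succ, map_mul]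
      linear_combination heq

/-- `f` is a minimal polynomial of `a`: a nonzero integer polynomial without constant
term annihilating `a`, of least degree, and with smallest positive leading coefficient
among such polynomials of that degree. -/
def IsMinPoly {K : Type} [NonUnitalRing K] (a : K) (f : Polynomial ℤ) : Prop :=
  f ≠ 0 ∧ f.coeff 0 = 0 ∧ evalnc f a = 0 ∧ 0 < f.leadingCoeff ∧
    (∀ g : Polynomial ℤ, g ≠ 0 → g.coeff 0 = 0 → evalnc g a = 0 →
      f.natDegree ≤ g.natDegree) ∧
    (∀ g : Polynomial ℤ, g ≠ 0 → g.coeff 0 = 0 → evalnc g a = 0 →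
      g.natDegree = f.natDegree → 0 < g.leadingCoeff → f.leadingCoeff ≤ g.leadingCoeff)

/-- If `l • ftilde(a) = 0` for a monic integer polynomial without constant term and a
positive integer `l`, then the minimal polynomial of `a` is a positive integer multiple
of a monic integer polynomial without constant term. -/
theorem stmt9 (K : Type) [NonUnitalRing K] (a : K) (ftilde : Polynomial ℤ) (l : ℕ)
    (hl : 0 < l) (hmon : ftilde.Monic) (hc : ftilde.coeff 0 = 0)
    (hann : (l : ℤ) • evalnc ftilde a = 0)
    (f : Polynomial ℤ) (hf : IsMinPoly a f) :
    ∃ (d : ℕ) (fstar : Polynomial ℤ), 0 < d ∧ fstar.Monic ∧ fstar.coeff 0 = 0 ∧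
      f = Polynomial.C (d : ℤ) * fstar := by
  obtain ⟨hf0, hfc, hfe, hflead, hmin, hminlead⟩ := hf
  have hl' : (l : ℤ) ≠ 0 := Int.natCast_ne_zero.mpr hl.ne'
  set u : Unitization ℤ K := (a : Unitization ℤ K) with hu
  have haf : Polynomial.aeval u f = 0 := aeval_eq_zero hfc hfe
  have h1 : Polynomial.aeval u (C (l : ℤ) * ftilde) = 0 := by
    have h2 : Polynomial.aeval u (C (l : ℤ) * ftilde) = (l : ℤ) • Polynomial.aeval u ftilde := by
      rw [map_mul, aeval_C, Algebra.algebraMap_eq_smul_one, smul_mul_assoc, one_mul]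
    rw [h2]
    ext
    · rw [Unitization.fst_smul, fst_aeval, hc, smul_zero, Unitization.fst_zero]
    · rw [Unitization.snd_smul, snd_aeval, hann, Unitization.snd_zero]
  obtain ⟨k, q, r, heq, hr⟩ := pdiv f hf0 ftilde
  set d : ℤ := f.leadingCoeff with hdd
  have hr0 : r = 0 := by
    rcases hr with h | hlt
    · exact h
    by_contra hne
    have hg : Polynomial.aeval u (C (l : ℤ) * r) = 0 := by
      have hrid : C (l : ℤ) * r = C (d ^ k) * (C (l : ℤ) * ftilde) - (C (l : ℤ) * q) * f := by
        linear_combination (-(C (l : ℤ))) * heq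
      rw [hrid, map_sub, map_mul (Polynomial.aeval u) (C (d ^ k)) (C (l : ℤ) * ftilde), h1,
        mul_zero, map_mul, haf, mul_zero, sub_zero]
    have hrc : r.coeff 0 = 0 := by
      have := congrArg (fun p => Polynomial.coeff p 0) heq
      simp only [coeff_C_mul, mul_coeff_zero, coeff_add, hc, hfc, mul_zero] at this
      linarith
    have hgne : C (l : ℤ) * r ≠ 0 := mul_ne_zero (by simpa using hl') hne
    have hgc : (C (l : ℤ) * r).coeff 0 = 0 := by rw [coeff_C_mul, hrc, mul_zero]
    have hge : evalnc (C (l : ℤ) * r) a = 0 := by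
      rw [← snd_aeval, ← hu, hg, Unitization.snd_zero]
    have := hmin _ hgne hgc hge
    rw [natDegree_C_mul hl'] at this
    omega
  rw [hr0, add_zero] at heq
  -- Gauss' lemma step
  have hdpos : (0:ℤ) < d ^ k := pow_pos hflead k
  have hcontent : d ^ k = q.content * f.content := by
    have h3 := congrArg Polynomial.content heq
    rw [content_C_mul, content_mul, hmon.isPrimitive.content_eq_one, mul_one,
      Int.normalize_of_nonneg hdpos.le] at h3
    exact h3
  have heq2 : C (d ^ k) * ftilde = C (d ^ k) * (q.primPart * f.primPart) := by
    calc C (d ^ k) * ftilde = q * f := heq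
      _ = (C q.content * q.primPart) * (C f.content * f.primPart) := by
          rw [← q.eq_C_content_mul_primPart, ← f.eq_C_content_mul_primPart]
      _ = C (q.content * f.content) * (q.primPart * f.primPart) := by rw [map_mul]; ring
      _ = C (d ^ k) * (q.primPart * f.primPart) := by rw [← hcontent]
  have hft : ftilde = q.primPart * f.primPart :=
    mul_left_cancel₀ (by simpa using hdpos.ne') heq2
  have hlead1 : q.primPart.leadingCoeff * f.primPart.leadingCoeff = 1 := by
    have h4 := congrArg leadingCoeff hft
    rw [leadingCoeff_mul, hmon.leadingCoeff] at h4
    exact h4.symm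
  have hcnn : 0 ≤ f.content := Int.nonneg_of_normalize_eq_self f.normalize_content
  have hc0 : f.content ≠ 0 := fun h => hf0 (content_eq_zero_iff.mp h)
  have hcf : f.leadingCoeff = f.content * f.primPart.leadingCoeff := by
    conv_lhs => rw [f.eq_C_content_mul_primPart]
    rw [leadingCoeff_mul, leadingCoeff_C]
  have hmonstar : f.primPart.Monic := by
    rcases Int.isUnit_iff.mp (IsUnit.of_mul_eq_one (a := f.primPart.leadingCoeff) _
      (by rw [mul_comm]; exact hlead1)) with h | h
    · exact h
    · rw [h, mul_neg_one] at hcf; exfalso; rw [← hdd] at hcf; omega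
  have hcd : f.content = d := by
    rw [hmonstar.leadingCoeff, mul_one] at hcf; exact hcf.symm
  refine ⟨d.toNat, f.primPart, by omega, hmonstar, ?_, ?_⟩
  · have h5 := congrArg (fun p => Polynomial.coeff p 0) f.eq_C_content_mul_primPart
    simp only [coeff_C_mul, hfc] at h5
    exact (mul_eq_zero.mp h5.symm).resolve_left hc0
  · rw [Int.toNat_of_nonneg hflead.le, ← hcd]
    exact f.eq_C_content_mul_primPart
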